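/- The matrices g₁ and g₂ satisfy g₁³ = 1, g₂³ = 1 and g₁g₂ = g₂g₁, and the subgroup of GL(10,ℤ) they generate has order 9; hence g₁ and g₂ generate a faithful action of ℤ₃×ℤ₃ on ℤ¹⁰. -/

import Mathlib

open Matrix

/-- The generator `g₁` of the ℤ₃×ℤ₃ action on the degree-2 homology lattice of the
ℤ₃×ℤ₃-symmetric dP₉ surface, in the basis (σ, f, θ₁₁, θ₂₁, θ₃₁, θ₃₂, θ₄₁, θ₄₂, μ, ν). -/
def g1mat : Matrix (Fin 10) (Fin 10) ℤ :=
  !![0,0,0,3,0,0,0,0,-1,-1;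
     0,1,0,3,0,1,0,1,-1,-1;
     0,0,1,0,0,0,0,0,0,0;
     0,0,0,-2,0,0,0,0,1,0;
     0,0,0,-2,0,-1,0,0,1,1;
     0,0,0,-1,1,-1,0,0,0,1;
     0,0,0,-2,0,0,0,-1,1,1;
     0,0,0,-1,0,0,1,-1,0,0;
     1,0,0,-3,0,0,0,0,2,1;
     0,0,0,0,0,0,0,0,0,1]

/-- The generator `g₂` of the ℤ₃×ℤ₃ action. -/
def g2mat : Matrix (Fin 10) (Fin 10) ℤ :=
  !![0,0,3,0,0,0,0,0,-1,-1;
     0,1,3,0,1,0,0,1,-1,-1;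
     0,0,-2,0,0,0,0,0,0,1;
     0,0,0,1,0,0,0,0,0,0;
     0,0,-1,0,-1,1,0,0,1,0;
     0,0,-2,0,-1,0,0,0,1,1;
     0,0,-2,0,0,0,0,-1,1,1;
     0,0,-1,0,0,0,1,-1,0,0;
     0,0,0,0,0,0,0,0,1,0;
     1,0,-3,0,0,0,0,0,1,2]

abbrev M10 := Matrix (Fin 10) (Fin 10) ℤ

lemma g1_pow3 : g1mat ^ 3 = 1 := by decide
lemma g2_pow3 : g2mat ^ 3 = 1 := by decide
lemma g_comm : g1mat * g2mat = g2mat * g1mat := by decide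

def U1 : M10ˣ := ⟨g1mat, g1mat ^ 2, by rw [← pow_succ']; exact g1_pow3,
  by rw [← pow_succ]; exact g1_pow3⟩
def U2 : M10ˣ := ⟨g2mat, g2mat ^ 2, by rw [← pow_succ']; exact g2_pow3,
  by rw [← pow_succ]; exact g2_pow3⟩

lemma U1_pow3 : U1 ^ 3 = 1 :=
  Units.ext (by rw [Units.val_pow_eq_pow_val, Units.val_one]; exact g1_pow3)
lemma U2_pow3 : U2 ^ 3 = 1 :=
  Units.ext (by rw [Units.val_pow_eq_pow_val, Units.val_one]; exact g2_pow3)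
lemma U_comm : Commute U1 U2 :=
  Units.ext (by exact g_comm)

noncomputable def f1 : ZMod 3 →+ Additive M10ˣ :=
  ZMod.lift 3 ⟨zmultiplesHom _ (Additive.ofMul U1), by
    simp only [zmultiplesHom_apply]
    apply Additive.toMul.injective
    simp only [toMul_zsmul, toMul_ofMul, toMul_zero]
    exact_mod_cast U1_pow3⟩

noncomputable def f2 : ZMod 3 →+ Additive M10ˣ :=
  ZMod.lift 3 ⟨zmultiplesHom _ (Additive.ofMul U2), by
    simp only [zmultiplesHom_apply]
    apply Additive.toMul.injective
    simp only [toMul_zsmul, toMul_ofMul, toMul_zero]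
    exact_mod_cast U2_pow3⟩

noncomputable def h1 : Multiplicative (ZMod 3) →* M10ˣ :=
  AddMonoidHom.toMultiplicativeLeft f1
noncomputable def h2 : Multiplicative (ZMod 3) →* M10ˣ :=
  AddMonoidHom.toMultiplicativeLeft f2

lemma cast_val (a : ZMod 3) : (((a.val : ℕ) : ℤ) : ZMod 3) = a := by
  push_cast
  simp [ZMod.natCast_val, ZMod.cast_id]

lemma h1_apply (x : Multiplicative (ZMod 3)) : h1 x = U1 ^ (Multiplicative.toAdd x).val := by
  set n := (Multiplicative.toAdd x).val with hn
  have h : x = Multiplicative.ofAdd (((n : ℤ)) : ZMod 3) := by rw [cast_val]; rfl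
  calc h1 x = Additive.toMul (f1 (((n : ℤ)) : ZMod 3)) := by rw [h]; rfl
    _ = Additive.toMul ((n : ℤ) • Additive.ofMul U1) := by simp only [f1, ZMod.lift_coe]; rfl
    _ = U1 ^ (n : ℤ) := by simp
    _ = U1 ^ n := zpow_natCast _ _

lemma h2_apply (x : Multiplicative (ZMod 3)) : h2 x = U2 ^ (Multiplicative.toAdd x).val := by
  set n := (Multiplicative.toAdd x).val with hn
  have h : x = Multiplicative.ofAdd (((n : ℤ)) : ZMod 3) := by rw [cast_val]; rfl
  calc h2 x = Additive.toMul (f2 (((n : ℤ)) : ZMod 3)) := by rw [h]; rfl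
    _ = Additive.toMul ((n : ℤ) • Additive.ofMul U2) := by simp only [f2, ZMod.lift_coe]; rfl
    _ = U2 ^ (n : ℤ) := by simp
    _ = U2 ^ n := zpow_natCast _ _

noncomputable def phi : Multiplicative (ZMod 3) × Multiplicative (ZMod 3) →* M10ˣ :=
  h1.noncommCoprod h2 (fun m n => by
    rw [h1_apply, h2_apply]; exact (U_comm).pow_pow _ _)

lemma phi_apply (p : Multiplicative (ZMod 3) × Multiplicative (ZMod 3)) :
    phi p = U1 ^ (Multiplicative.toAdd p.1).val * U2 ^ (Multiplicative.toAdd p.2).val := by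
  simp [phi, MonoidHom.noncommCoprod_apply, h1_apply, h2_apply]

lemma distinct : ∀ i < 3, ∀ j < 3, g1mat ^ i * g2mat ^ j = 1 → i = 0 ∧ j = 0 := by decide

lemma phi_inj : Function.Injective phi := by
  rw [injective_iff_map_eq_one]
  rintro ⟨x, y⟩ hp
  rw [phi_apply] at hp
  have hm : g1mat ^ (Multiplicative.toAdd x).val * g2mat ^ (Multiplicative.toAdd y).val = 1 := by
    have := congrArg Units.val hp
    simpa [U1, U2] using this
  obtain ⟨hx, hy⟩ := distinct _ (ZMod.val_lt _) _ (ZMod.val_lt _) hm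
  have hx' : Multiplicative.toAdd x = 0 := (ZMod.val_eq_zero _).mp hx
  have hy' : Multiplicative.toAdd y = 0 := (ZMod.val_eq_zero _).mp hy
  have hx1 : x = 1 := by simpa using hx'
  have hy1 : y = 1 := by simpa using hy'
  rw [hx1, hy1]
  rfl

lemma range_eq : phi.range = Subgroup.closure ({U1, U2} : Set M10ˣ) := by
  apply le_antisymm
  · rintro _ ⟨p, rfl⟩
    rw [phi_apply]
    exact mul_mem (pow_mem (Subgroup.subset_closure (by simp)) _)
      (pow_mem (Subgroup.subset_closure (by simp)) _)
  · rw [Subgroup.closure_le]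
    rintro x hx
    rcases hx with rfl | rfl
    · exact ⟨(Multiplicative.ofAdd 1, 1), by rw [phi_apply]; simp [ZMod.val_one]⟩
    · exact ⟨(1, Multiplicative.ofAdd 1), by rw [phi_apply]; simp [ZMod.val_one]⟩

lemma card9 : Nat.card (Subgroup.closure ({U1, U2} : Set M10ˣ)) = 9 := by
  rw [← range_eq]
  have h1 : Nat.card phi.range = Nat.card (Set.range phi) :=
    Nat.card_congr (Equiv.subtypeEquivRight (fun x => by
      simp [MonoidHom.mem_range, Set.mem_range]))
  rw [h1, Nat.card_range_of_injective phi_inj, Nat.card_prod]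
  simp [Nat.card_eq_fintype_card]


/-- `g₁³ = 1`, `g₂³ = 1`, `g₁g₂ = g₂g₁`, and the subgroup of GL(10,ℤ) generated by
`g₁` and `g₂` has order 9; hence `g₁` and `g₂` generate a faithful action of ℤ₃×ℤ₃ on ℤ¹⁰. -/
theorem g1_g2_generate_Z3_Z3 :
    g1mat ^ 3 = 1 ∧ g2mat ^ 3 = 1 ∧ g1mat * g2mat = g2mat * g1mat ∧
    ∃ u1 u2 : (Matrix (Fin 10) (Fin 10) ℤ)ˣ,
      (u1 : Matrix (Fin 10) (Fin 10) ℤ) = g1mat ∧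
      (u2 : Matrix (Fin 10) (Fin 10) ℤ) = g2mat ∧
      Nat.card (Subgroup.closure ({u1, u2} : Set (Matrix (Fin 10) (Fin 10) ℤ)ˣ)) = 9 :=
  ⟨g1_pow3, g2_pow3, g_comm, U1, U2, rfl, rfl, card9⟩
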